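/- arXiv:1211.5406 — 2 statements merged into one kernel-verified Lean document; each statement's English description precedes it below -/
import Mathlib

section
/- The optimal value of the doubly nonnegative relaxation (DNNP) of the binary quadratic program equals the optimal value of the semidefinite relaxation (SDR2), provided both feasible sets are nonempty: Opt(SDR2) = Opt(DNNP). -/
open Matrix

/-- The all-ones vector. -/
def allOnes (n : ℕ) : Fin n → ℝ := fun _ => 1

/-- Feasibility for the relaxation (SDR2). -/
def FeasSDR2 {n m : ℕ} (a : Fin m → Fin n → ℝ) (b : Fin m → ℝ)
    (x : Fin n → ℝ) (X : Matrix (Fin n) (Fin n) ℝ) : Prop :=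
  (∀ i, a i ⬝ᵥ x = b i) ∧
  (∀ i, a i ⬝ᵥ X.mulVec (a i) = (b i) ^ 2) ∧
  (∀ i, X i i = 1) ∧
  (∀ i j : Fin n, i ≤ j → 1 - x i - x j + X i j ≥ 0) ∧
  (fromBlocks (1 : Matrix Unit Unit ℝ) (replicateRow Unit x) (replicateCol Unit x) X).PosSemidef

/-- Feasibility for the doubly nonnegative relaxation (DNNP). -/
def FeasDNNP {n m : ℕ} (a : Fin m → Fin n → ℝ) (b : Fin m → ℝ)
    (z : Fin n → ℝ) (Z : Matrix (Fin n) (Fin n) ℝ) : Prop :=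
  (∀ i, 2 * (a i ⬝ᵥ z) = a i ⬝ᵥ allOnes n - b i) ∧
  (∀ i, 4 * (a i ⬝ᵥ Z.mulVec (a i)) = (a i ⬝ᵥ allOnes n - b i) ^ 2) ∧
  (∀ i, Z i i = z i) ∧
  (fromBlocks (1 : Matrix Unit Unit ℝ) (replicateRow Unit z) (replicateCol Unit z) Z).PosSemidef ∧
  (∀ p q, 0 ≤ fromBlocks (1 : Matrix Unit Unit ℝ) (replicateRow Unit z) (replicateCol Unit z) Z p q)


section AuxLemmas

open Finset

variable {n : ℕ}

private lemma sum_comm_symm (Q : Matrix (Fin n) (Fin n) ℝ) (hQ : Q.IsSymm) (x : Fin n → ℝ) :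
    ∑ i, ∑ j, Q i j * x j = ∑ i, ∑ j, Q i j * x i := by
  rw [Finset.sum_comm]
  exact Finset.sum_congr rfl fun u _ => Finset.sum_congr rfl fun v _ => by rw [hQ.apply]

private lemma key_lin (α z x : Fin n → ℝ) (hz : ∀ i, z i = (1 - x i) / 2) :
    2 * (α ⬝ᵥ z) = α ⬝ᵥ allOnes n - α ⬝ᵥ x := by
  simp only [dotProduct, allOnes, mul_one, Finset.mul_sum, ← Finset.sum_sub_distrib]
  exact Finset.sum_congr rfl fun j _ => by rw [hz j]; ring

private lemma key_quad (α x : Fin n → ℝ) (Z X : Matrix (Fin n) (Fin n) ℝ)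
    (hZ : ∀ i j, Z i j = (1 - x i - x j + X i j) / 4) :
    4 * (α ⬝ᵥ Z.mulVec α) =
      (α ⬝ᵥ allOnes n) * (α ⬝ᵥ allOnes n) - (α ⬝ᵥ allOnes n) * (α ⬝ᵥ x)
        - (α ⬝ᵥ x) * (α ⬝ᵥ allOnes n) + α ⬝ᵥ X.mulVec α := by
  simp only [dotProduct, mulVec, allOnes, mul_one]
  rw [Finset.sum_mul_sum, Finset.sum_mul_sum, Finset.sum_mul_sum]
  simp only [Finset.mul_sum, ← Finset.sum_sub_distrib, ← Finset.sum_add_distrib]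
  exact Finset.sum_congr rfl fun i _ => Finset.sum_congr rfl fun j _ => by rw [hZ i j]; ring

private lemma qf_expand (x : Fin n → ℝ) (X : Matrix (Fin n) (Fin n) ℝ) (y : Unit ⊕ Fin n → ℝ) :
    y ⬝ᵥ (fromBlocks (1 : Matrix Unit Unit ℝ) (replicateRow Unit x) (replicateCol Unit x) X).mulVec y =
      y (Sum.inl ()) * y (Sum.inl ())
        + 2 * (y (Sum.inl ()) * ∑ i, x i * y (Sum.inr i))
        + ∑ i, ∑ j, y (Sum.inr i) * X i j * y (Sum.inr j) := by
  simp only [dotProduct, mulVec, Fintype.sum_sum_type, fromBlocks, Sum.elim_inl, Sum.elim_inr,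
    Matrix.of_apply, replicateRow_apply, replicateCol_apply, one_apply, if_true, eq_self_iff_true,
    Fintype.sum_unique, mul_one, mul_add, Finset.sum_add_distrib, Finset.mul_sum, Finset.sum_mul]
  simp only [show (default : Unit) = () from rfl]
  ring_nf
  have hs : (∑ i, y (Sum.inl ()) * y (Sum.inr i) * x i)
      = ∑ i, y (Sum.inl ()) * x i * y (Sum.inr i) := Finset.sum_congr rfl fun i _ => by ring
  rw [hs, ← Finset.sum_mul]
  ring

private lemma herm_fromBlocks (x : Fin n → ℝ) (X : Matrix (Fin n) (Fin n) ℝ)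
    (hX : ∀ i j, X j i = X i j) :
    (fromBlocks (1 : Matrix Unit Unit ℝ) (replicateRow Unit x) (replicateCol Unit x) X).IsHermitian := by
  ext p q
  cases p <;> cases q <;>
    simp [conjTranspose_apply, fromBlocks, one_apply, hX]

private lemma psd_forward (x z : Fin n → ℝ) (X Z : Matrix (Fin n) (Fin n) ℝ)
    (hz : ∀ i, z i = (1 - x i) / 2) (hZ : ∀ i j, Z i j = (1 - x i - x j + X i j) / 4)
    (hM : (fromBlocks (1 : Matrix Unit Unit ℝ) (replicateRow Unit x) (replicateCol Unit x) X).PosSemidef) :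
    (fromBlocks (1 : Matrix Unit Unit ℝ) (replicateRow Unit z) (replicateCol Unit z) Z).PosSemidef := by
  have hXs : ∀ i j, X j i = X i j := by
    intro i j
    have := hM.1.apply (Sum.inr i) (Sum.inr j)
    simpa [fromBlocks] using this
  rw [posSemidef_iff_dotProduct_mulVec]
  constructor
  · exact herm_fromBlocks z Z fun i j => by rw [hZ, hZ, hXs]; ring
  · intro y
    have h0 := (posSemidef_iff_dotProduct_mulVec.mp hM).2 (Sum.elim (fun _ : Unit => y (Sum.inl ()) + (∑ i, y (Sum.inr i)) / 2)
      (fun i => -(y (Sum.inr i)) / 2))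
    rw [show ∀ w : Unit ⊕ Fin n → ℝ, star w = w from fun _ => rfl] at h0 ⊢
    rw [qf_expand] at h0 ⊢
    simp only [Sum.elim_inl, Sum.elim_inr] at h0
    have e1 : (∑ i, x i * (-(y (Sum.inr i)) / 2)) = (-1/2) * ∑ i, x i * y (Sum.inr i) := by
      rw [Finset.mul_sum]; exact Finset.sum_congr rfl fun i _ => by ring
    have e2 : (∑ i, ∑ j, (-(y (Sum.inr i)) / 2) * X i j * (-(y (Sum.inr j)) / 2))
        = (1/4) * ∑ i, ∑ j, y (Sum.inr i) * X i j * y (Sum.inr j) := by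
      rw [Finset.mul_sum]
      exact Finset.sum_congr rfl fun i _ => by
        rw [Finset.mul_sum]; exact Finset.sum_congr rfl fun j _ => by ring
    have e3 : (∑ i, z i * y (Sum.inr i))
        = (1/2) * (∑ i, y (Sum.inr i)) - (1/2) * ∑ i, x i * y (Sum.inr i) := by
      simp only [Finset.mul_sum, ← Finset.sum_sub_distrib]
      exact Finset.sum_congr rfl fun i _ => by rw [hz i]; ring
    have e4 : (∑ i, ∑ j, y (Sum.inr i) * Z i j * y (Sum.inr j))
        = (1/4) * ((∑ i, y (Sum.inr i)) * (∑ i, y (Sum.inr i)))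
          - (1/4) * ((∑ i, y (Sum.inr i)) * (∑ i, x i * y (Sum.inr i)))
          - (1/4) * ((∑ i, x i * y (Sum.inr i)) * (∑ i, y (Sum.inr i)))
          + (1/4) * ∑ i, ∑ j, y (Sum.inr i) * X i j * y (Sum.inr j) := by
      rw [Finset.sum_mul_sum, Finset.sum_mul_sum, Finset.sum_mul_sum]
      simp only [Finset.mul_sum, ← Finset.sum_sub_distrib, ← Finset.sum_add_distrib]
      exact Finset.sum_congr rfl fun i _ => Finset.sum_congr rfl fun j _ => by
        rw [hZ i j]; ring
    rw [e1, e2] at h0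
    rw [e3, e4]
    nlinarith [h0]

private lemma psd_backward (x z : Fin n → ℝ) (X Z : Matrix (Fin n) (Fin n) ℝ)
    (hz : ∀ i, z i = (1 - x i) / 2) (hZ : ∀ i j, Z i j = (1 - x i - x j + X i j) / 4)
    (hM : (fromBlocks (1 : Matrix Unit Unit ℝ) (replicateRow Unit z) (replicateCol Unit z) Z).PosSemidef) :
    (fromBlocks (1 : Matrix Unit Unit ℝ) (replicateRow Unit x) (replicateCol Unit x) X).PosSemidef := by
  have hZs : ∀ i j, Z j i = Z i j := by
    intro i j
    have := hM.1.apply (Sum.inr i) (Sum.inr j)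
    simpa [fromBlocks] using this
  have hXs : ∀ i j, X j i = X i j := by
    intro i j
    have h1 := hZ i j; have h2 := hZ j i; have h3 := hZs i j
    nlinarith [h1, h2, h3]
  rw [posSemidef_iff_dotProduct_mulVec]
  constructor
  · exact herm_fromBlocks x X hXs
  · intro y
    have h0 := (posSemidef_iff_dotProduct_mulVec.mp hM).2 (Sum.elim (fun _ : Unit => y (Sum.inl ()) + ∑ i, y (Sum.inr i))
      (fun i => -2 * y (Sum.inr i)))
    rw [show ∀ w : Unit ⊕ Fin n → ℝ, star w = w from fun _ => rfl] at h0 ⊢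
    rw [qf_expand] at h0 ⊢
    simp only [Sum.elim_inl, Sum.elim_inr] at h0
    have e1 : (∑ i, z i * (-2 * y (Sum.inr i)))
        = (-1) * (∑ i, y (Sum.inr i)) + ∑ i, x i * y (Sum.inr i) := by
      simp only [Finset.mul_sum, neg_one_mul, ← Finset.sum_add_distrib]
      refine Finset.sum_congr rfl fun i _ => ?_
      rw [hz i]; ring
    have e2 : (∑ i, ∑ j, (-2 * y (Sum.inr i)) * Z i j * (-2 * y (Sum.inr j)))
        = (∑ i, y (Sum.inr i)) * (∑ i, y (Sum.inr i))
          - (∑ i, y (Sum.inr i)) * (∑ i, x i * y (Sum.inr i))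
          - (∑ i, x i * y (Sum.inr i)) * (∑ i, y (Sum.inr i))
          + ∑ i, ∑ j, y (Sum.inr i) * X i j * y (Sum.inr j) := by
      rw [Finset.sum_mul_sum, Finset.sum_mul_sum, Finset.sum_mul_sum]
      simp only [← Finset.sum_sub_distrib, ← Finset.sum_add_distrib]
      exact Finset.sum_congr rfl fun i _ => Finset.sum_congr rfl fun j _ => by
        rw [hZ i j]; ring
    rw [e1, e2] at h0
    nlinarith [h0]

private lemma obj_eq (Q : Matrix (Fin n) (Fin n) ℝ) (hQ : Q.IsSymm) (c x z : Fin n → ℝ)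
    (X Z : Matrix (Fin n) (Fin n) ℝ)
    (hz : ∀ i, z i = (1 - x i) / 2) (hZ : ∀ i j, Z i j = (1 - x i - x j + X i j) / 4) :
    (Q * X).trace + 2 * (c ⬝ᵥ x) =
      4 * (Q * Z).trace - 4 * (z ⬝ᵥ (Q.mulVec (allOnes n) + c))
        + allOnes n ⬝ᵥ Q.mulVec (allOnes n) + 2 * (c ⬝ᵥ allOnes n) := by
  have htr : ∀ Y : Matrix (Fin n) (Fin n) ℝ, (Q * Y).trace = ∑ i, ∑ j, Q i j * Y j i := by
    intro Y; simp [Matrix.trace, Matrix.diag, Matrix.mul_apply]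
  have h1 : ∑ i, ∑ j, Q i j * Z j i
      = (1/4) * (∑ i, ∑ j, Q i j) - (1/4) * (∑ i, ∑ j, Q i j * x j)
        - (1/4) * (∑ i, ∑ j, Q i j * x i) + (1/4) * (∑ i, ∑ j, Q i j * X j i) := by
    simp only [Finset.mul_sum, ← Finset.sum_sub_distrib, ← Finset.sum_add_distrib]
    exact Finset.sum_congr rfl fun i _ => Finset.sum_congr rfl fun j _ => by rw [hZ j i]; ring
  have h2a : z ⬝ᵥ Q.mulVec (allOnes n)
      = (1/2) * (∑ i, ∑ j, Q i j) - (1/2) * (∑ i, ∑ j, Q i j * x i) := by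
    simp only [dotProduct, mulVec, allOnes, mul_one, Finset.mul_sum, ← Finset.sum_sub_distrib]
    exact Finset.sum_congr rfl fun i _ => Finset.sum_congr rfl fun j _ => by rw [hz i]; ring
  have h2b : z ⬝ᵥ c = (1/2) * (∑ i, c i) - (1/2) * (∑ i, c i * x i) := by
    simp only [dotProduct, Finset.mul_sum, ← Finset.sum_sub_distrib]
    exact Finset.sum_congr rfl fun i _ => by rw [hz i]; ring
  have h3 : allOnes n ⬝ᵥ Q.mulVec (allOnes n) = ∑ i, ∑ j, Q i j := by
    simp [dotProduct, mulVec, allOnes]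
  have h4 : c ⬝ᵥ allOnes n = ∑ i, c i := by simp [dotProduct, allOnes]
  have h5 : c ⬝ᵥ x = ∑ i, c i * x i := rfl
  rw [htr X, htr Z, h1, dotProduct_add, h2a, h2b, h3, h4, h5, sum_comm_symm Q hQ x]
  ring

private lemma feas_forward {m : ℕ} (a : Fin m → Fin n → ℝ) (b : Fin m → ℝ)
    (x : Fin n → ℝ) (X : Matrix (Fin n) (Fin n) ℝ) (hX : X.IsSymm)
    (h : FeasSDR2 a b x X) :
    FeasDNNP a b (fun i => (1 - x i) / 2)
      (Matrix.of fun i j => (1 - x i - x j + X i j) / 4) := by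
  obtain ⟨h1, h2, h3, h4, h5⟩ := h
  have hz : ∀ i, (fun i => (1 - x i) / 2) i = (1 - x i) / 2 := fun _ => rfl
  have hZ : ∀ i j, (Matrix.of fun i j => (1 - x i - x j + X i j) / 4 : Matrix (Fin n) (Fin n) ℝ)
      i j = (1 - x i - x j + X i j) / 4 := fun _ _ => rfl
  refine ⟨?_, ?_, ?_, ?_, ?_⟩
  · intro i; rw [key_lin (a i) _ x hz, h1 i]
  · intro i
    rw [key_quad (a i) x _ X hZ, h1 i, h2 i]
    ring
  · intro i
    show (1 - x i - x i + X i i) / 4 = (1 - x i) / 2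
    rw [h3 i]; ring
  · exact psd_forward x _ X _ hz hZ h5
  · intro p q
    have hx1 : ∀ i, x i ≤ 1 := by
      intro i; have := h4 i i le_rfl; rw [h3 i] at this; linarith
    rcases p with p | i <;> rcases q with q | j
    · simp [fromBlocks, one_apply]
    · simp only [fromBlocks_apply₁₂, replicateRow_apply]
      have := hx1 j; linarith
    · simp only [fromBlocks_apply₂₁, replicateCol_apply]
      have := hx1 i; linarith
    · simp only [fromBlocks_apply₂₂, Matrix.of_apply]
      rcases le_total i j with hij | hij
      · have := h4 i j hij; linarith
      · have := h4 j i hij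
        have hsx := hX.apply i j
        linarith

private lemma feas_backward {m : ℕ} (a : Fin m → Fin n → ℝ) (b : Fin m → ℝ)
    (z : Fin n → ℝ) (Z : Matrix (Fin n) (Fin n) ℝ)
    (h : FeasDNNP a b z Z) :
    FeasSDR2 a b (fun i => 1 - 2 * z i)
      (Matrix.of fun i j => 1 - 2 * z i - 2 * z j + 4 * Z i j) := by
  obtain ⟨h1, h2, h3, h4, h5⟩ := h
  have hz : ∀ i, z i = (1 - (fun i => 1 - 2 * z i) i) / 2 := fun i => by
    show z i = (1 - (1 - 2 * z i)) / 2; ring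
  have hZ : ∀ i j, Z i j = (1 - (fun i => 1 - 2 * z i) i - (fun i => 1 - 2 * z i) j
      + (Matrix.of fun i j => 1 - 2 * z i - 2 * z j + 4 * Z i j : Matrix (Fin n) (Fin n) ℝ) i j)
      / 4 := fun i j => by
    show Z i j = (1 - (1 - 2 * z i) - (1 - 2 * z j) + (1 - 2 * z i - 2 * z j + 4 * Z i j)) / 4
    ring
  have hlin : ∀ i, a i ⬝ᵥ (fun i => 1 - 2 * z i) = b i := by
    intro i
    have hk := key_lin (a i) z (fun i => 1 - 2 * z i) hz
    have := h1 i
    linarith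
  refine ⟨hlin, ?_, ?_, ?_, ?_⟩
  · intro i
    have hk := key_quad (a i) (fun i => 1 - 2 * z i)
      Z (Matrix.of fun i j => 1 - 2 * z i - 2 * z j + 4 * Z i j) hZ
    have hq := h2 i
    rw [hlin i] at hk
    rw [sub_sq] at hq
    nlinarith [hk, hq]
  · intro i
    show 1 - 2 * z i - 2 * z i + 4 * Z i i = 1
    rw [h3 i]; ring
  · intro i j _
    have := h5 (Sum.inr i) (Sum.inr j)
    simp only [fromBlocks_apply₂₂] at this
    show 1 - (1 - 2 * z i) - (1 - 2 * z j) + (1 - 2 * z i - 2 * z j + 4 * Z i j) ≥ 0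
    linarith
  · exact psd_backward _ z _ Z hz hZ h4
end AuxLemmas

theorem opt_SDR2_eq_opt_DNNP {n m : ℕ}
    (Q : Matrix (Fin n) (Fin n) ℝ) (hQ : Q.IsSymm) (c : Fin n → ℝ)
    (a : Fin m → Fin n → ℝ) (b : Fin m → ℝ)
    (hfeas1 : ∃ x X, X.IsSymm ∧ FeasSDR2 a b x X)
    (hfeas2 : ∃ z Z, Z.IsSymm ∧ FeasDNNP a b z Z) :
    sInf {v : ℝ | ∃ x X, X.IsSymm ∧ FeasSDR2 a b x X ∧
          v = (Q * X).trace + 2 * (c ⬝ᵥ x)} =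
      sInf {v : ℝ | ∃ z Z, Z.IsSymm ∧ FeasDNNP a b z Z ∧
          v = 4 * (Q * Z).trace - 4 * (z ⬝ᵥ (Q.mulVec (allOnes n) + c))
              + allOnes n ⬝ᵥ Q.mulVec (allOnes n) + 2 * (c ⬝ᵥ allOnes n)} := by
  congr 1
  ext v
  constructor
  · rintro ⟨x, X, hXs, hfeas, rfl⟩
    refine ⟨fun i => (1 - x i) / 2, Matrix.of fun i j => (1 - x i - x j + X i j) / 4, ?_, ?_, ?_⟩
    · ext i j
      show (1 - x j - x i + X j i) / 4 = (1 - x i - x j + X i j) / 4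
      rw [hXs.apply i j]; ring
    · exact feas_forward a b x X hXs hfeas
    · exact obj_eq Q hQ c x _ X _ (fun _ => rfl) (fun _ _ => rfl)
  · rintro ⟨z, Z, hZs, hfeas, rfl⟩
    refine ⟨fun i => 1 - 2 * z i, Matrix.of fun i j => 1 - 2 * z i - 2 * z j + 4 * Z i j,
      ?_, ?_, ?_⟩
    · ext i j
      show 1 - 2 * z j - 2 * z i + 4 * Z j i = 1 - 2 * z i - 2 * z j + 4 * Z i j
      rw [hZs.apply i j]; ring
    · exact feas_backward a b z Z hfeas
    · refine (obj_eq Q hQ c _ z _ Z ?_ ?_).symm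
      · intro i
        show z i = (1 - (1 - 2 * z i)) / 2; ring
      · intro i j
        show Z i j = (1 - (1 - 2 * z i) - (1 - 2 * z j) + (1 - 2 * z i - 2 * z j + 4 * Z i j)) / 4
        ring
end

section
/- For the max-cut problem, the optimal value of the doubly nonnegative relaxation equals the optimal value of the standard semidefinite relaxation: sup{ (1/4) L•U : U ⪰ 0, U_{ii} = 1 ∀i } = sup{ L•X - xᵀLe + (1/4)eᵀLe : X_{ii} = x_i ∀i, [[1, xᵀ],[x, X]] ⪰ 0 and entrywise nonnegative }. -/
open Matrix

lemma psd_smul {m : Type*} [Fintype m] {U : Matrix m m ℝ} (h : U.PosSemidef) {c : ℝ}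
    (hc : 0 ≤ c) : (c • U).PosSemidef := by
  refine PosSemidef.of_dotProduct_mulVec_nonneg ?_ fun v => ?_
  · unfold Matrix.IsHermitian
    rw [conjTranspose_smul, h.1]
    simp
  · rw [Matrix.smul_mulVec, dotProduct_smul]
    exact smul_nonneg hc (h.dotProduct_mulVec_nonneg v)

lemma posDef_one_unit : (1 : Matrix Unit Unit ℝ).PosDef := by
  exact PosDef.one

lemma block_psd_iff {n : ℕ} (x : Fin n → ℝ) (X : Matrix (Fin n) (Fin n) ℝ) :
    (fromBlocks (1 : Matrix Unit Unit ℝ) (replicateRow Unit x) (replicateCol Unit x) X).PosSemidef ↔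
      (X - replicateCol Unit x * replicateRow Unit x).PosSemidef := by
  have hB : (replicateRow Unit x)ᴴ = replicateCol Unit x := by
    ext i j; simp [conjTranspose_apply]
  rw [← hB]
  haveI : Invertible (1 : Matrix Unit Unit ℝ) := invertibleOne
  have := Matrix.PosDef.fromBlocks₁₁ (A := (1 : Matrix Unit Unit ℝ)) (replicateRow Unit x) X
    posDef_one_unit
  rw [this]
  congr! 1
  rw [inv_one, Matrix.mul_one]

lemma entry_bound {n : ℕ} {U : Matrix (Fin n) (Fin n) ℝ} (h : U.PosSemidef)
    (hd : ∀ i, U i i = 1) (i j : Fin n) : -1 ≤ U i j := by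
  have hq := h.dotProduct_mulVec_nonneg (Pi.single i (1:ℝ) + Pi.single j 1)
  have hsym : U j i = U i j := h.1.apply i j
  simp only [star_trivial, mulVec_add, mulVec_single, dotProduct_add, add_dotProduct,
    single_dotProduct, mul_one, one_mul, Pi.add_apply, MulOpposite.op_one, one_smul,
    col_apply] at hq
  have h1 := hd i; have h2 := hd j
  nlinarith [hq]

theorem maxcut_DNNP_eq_SDR {n : ℕ} (L : Matrix (Fin n) (Fin n) ℝ) (hL : L.IsSymm) :
    sSup {v : ℝ | ∃ U : Matrix (Fin n) (Fin n) ℝ, U.PosSemidef ∧ (∀ i, U i i = 1) ∧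
          v = (1 / 4 : ℝ) * (L * U).trace} =
      sSup {v : ℝ | ∃ (x : Fin n → ℝ) (X : Matrix (Fin n) (Fin n) ℝ),
          (∀ i, X i i = x i) ∧
          (fromBlocks (1 : Matrix Unit Unit ℝ) (replicateRow Unit x) (replicateCol Unit x) X).PosSemidef ∧
          (∀ p q, 0 ≤ fromBlocks (1 : Matrix Unit Unit ℝ) (replicateRow Unit x) (replicateCol Unit x) X p q) ∧
          v = (L * X).trace - x ⬝ᵥ L.mulVec (allOnes n)
              + (1 / 4 : ℝ) * (allOnes n ⬝ᵥ L.mulVec (allOnes n))} := by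
  congr 1
  ext v
  simp only [Set.mem_setOf_eq]
  constructor
  · rintro ⟨U, hU, hd, rfl⟩
    refine ⟨fun _ => (1/2 : ℝ), Matrix.of fun i j => (U i j + 1)/4, ?_, ?_, ?_, ?_⟩
    · intro i; simp [hd i]; norm_num
    · rw [block_psd_iff]
      have hEq : (Matrix.of fun i j => (U i j + 1)/4) -
          replicateCol Unit (fun _ => (1/2:ℝ)) * replicateRow Unit (fun _ => (1/2:ℝ)) = (1/4 : ℝ) • U := by
        ext i j
        simp [Matrix.mul_apply]
        ring
      rw [hEq]; exact psd_smul hU (by norm_num)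
    · intro p q
      rcases p with p | p <;> rcases q with q | q
      · cases p; cases q; simp [fromBlocks]
      · simp [fromBlocks]
      · simp [fromBlocks]
      · simp only [fromBlocks, Matrix.of_apply, Sum.elim_inr]
        have := entry_bound hU hd p q
        simp; linarith
    · simp only [Matrix.trace, Matrix.diag, Matrix.mul_apply, dotProduct, mulVec, allOnes,
        Matrix.of_apply, Finset.mul_sum, Finset.sum_div, mul_one]
      rw [← Finset.sum_sub_distrib, ← Finset.sum_add_distrib]
      refine Finset.sum_congr rfl fun i _ => ?_
      rw [← Finset.sum_sub_distrib, ← Finset.sum_add_distrib]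
      refine Finset.sum_congr rfl fun j _ => ?_
      ring
  · rintro ⟨x, X, hd, hpsd, hnn, rfl⟩
    set w : Fin n → ℝ := fun i => 2 * x i - 1 with hw
    refine ⟨Matrix.of fun i j => 4 * X i j - 2 * x i - 2 * x j + 1, ?_, ?_, ?_⟩
    · have hS := (block_psd_iff x X).mp hpsd
      have hww : (replicateCol Unit w * (replicateCol Unit w)ᴴ).PosSemidef :=
        posSemidef_self_mul_conjTranspose (replicateCol Unit w)
      have hwc : (replicateCol Unit w)ᴴ = replicateRow Unit w := by
        ext i j; simp [conjTranspose_apply]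
      rw [hwc] at hww
      have hrep : (Matrix.of fun i j => 4 * X i j - 2 * x i - 2 * x j + 1) =
          (4:ℝ) • (X - replicateCol Unit x * replicateRow Unit x) + replicateCol Unit w * replicateRow Unit w := by
        ext i j
        simp [Matrix.mul_apply, hw]
        ring
      rw [hrep]
      exact (psd_smul hS (by norm_num)).add hww
    · intro i; simp [hd i]; ring
    · have hswap : (∑ i, ∑ j, L i j * x j) = ∑ i, ∑ j, L i j * x i := by
        rw [Finset.sum_comm]
        exact Finset.sum_congr rfl fun a _ => Finset.sum_congr rfl fun b _ => by
          rw [hL.apply a b]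
      have key : (∑ i, ∑ j, L i j * (4 * X j i - 2 * x j - 2 * x i + 1)) =
          4 * (∑ i, ∑ j, L i j * X j i) - 4 * (∑ i, ∑ j, L i j * x i)
            + (∑ i, ∑ j, L i j) := by
        have expand : ∀ i j : Fin n, L i j * (4 * X j i - 2 * x j - 2 * x i + 1)
            = 4 * (L i j * X j i) - 2 * (L i j * x j) - 2 * (L i j * x i) + L i j :=
          fun i j => by ring
        simp_rw [expand, Finset.sum_add_distrib, Finset.sum_sub_distrib, ← Finset.mul_sum]
        rw [hswap]; ring
      have h1 : (L * X).trace = ∑ i, ∑ j, L i j * X j i := by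
        simp [Matrix.trace, Matrix.diag, Matrix.mul_apply]
      have h2 : x ⬝ᵥ L.mulVec (allOnes n) = ∑ i, ∑ j, L i j * x i := by
        simp [dotProduct, mulVec, allOnes, Finset.mul_sum]
        exact Finset.sum_congr rfl fun i _ => Finset.sum_congr rfl fun j _ => by ring
      have h3 : allOnes n ⬝ᵥ L.mulVec (allOnes n) = ∑ i, ∑ j, L i j := by
        simp [dotProduct, mulVec, allOnes]
      have h4 : (L * Matrix.of fun i j => 4 * X i j - 2 * x i - 2 * x j + 1).trace =
          ∑ i, ∑ j, L i j * (4 * X j i - 2 * x j - 2 * x i + 1) := by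
        simp [Matrix.trace, Matrix.diag, Matrix.mul_apply]
      rw [h1, h2, h3, h4, key]
      ring
end
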